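/- Let {f_i}_{i∈I} be a Parseval frame for a Hilbert space H. For every subset J ⊆ I, every E ⊆ J^c, and every f ∈ H: ‖∑_{i∈J∪E} ⟨f, f_i⟩ f_i‖² − ‖∑_{i∈J^c∖E} ⟨f, f_i⟩ f_i‖² = ‖∑_{i∈J} ⟨f, f_i⟩ f_i‖² − ‖∑_{i∈J^c} ⟨f, f_i⟩ f_i‖² + 2 ∑_{i∈E} |⟨f, f_i⟩|², where J^c = I \ J. -/

import Mathlib

open scoped InnerProductSpace

section Aux

variable {H : Type*} [NormedAddCommGroup H] [InnerProductSpace ℂ H] [CompleteSpace H]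
  {ι : Type*}

/-- Finite Bessel-type bound coming from the Parseval hypothesis. -/
lemma aux_finset_bound (f : ι → H)
    (hP : ∀ x : H, HasSum (fun i => ‖⟪f i, x⟫_ℂ‖ ^ 2) (‖x‖ ^ 2))
    (g : ι → ℂ) (t : Finset ι) :
    ‖∑ i ∈ t, g i • f i‖ ^ 2 ≤ ∑ i ∈ t, ‖g i‖ ^ 2 := by
  classical
  set v : H := ∑ i ∈ t, g i • f i with hv
  set S : ℝ := ∑ i ∈ t, ‖g i‖ ^ 2 with hS
  have hS0 : 0 ≤ S := Finset.sum_nonneg fun i _ => sq_nonneg _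
  -- bound on ∑ ‖⟪f i, v⟫‖² over t
  have hBessel : ∑ i ∈ t, ‖⟪f i, v⟫_ℂ‖ ^ 2 ≤ ‖v‖ ^ 2 :=
    sum_le_hasSum t (fun i _ => sq_nonneg _) (hP v)
  have hCS : (∑ i ∈ t, ‖g i‖ * ‖⟪f i, v⟫_ℂ‖) ^ 2 ≤ S * ‖v‖ ^ 2 := by
    calc (∑ i ∈ t, ‖g i‖ * ‖⟪f i, v⟫_ℂ‖) ^ 2
        ≤ (∑ i ∈ t, ‖g i‖ ^ 2) * ∑ i ∈ t, ‖⟪f i, v⟫_ℂ‖ ^ 2 :=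
          Finset.sum_mul_sq_le_sq_mul_sq t _ _
      _ ≤ S * ‖v‖ ^ 2 := by
          exact mul_le_mul_of_nonneg_left hBessel hS0
  have hnorm : ‖v‖ ^ 2 ≤ ∑ i ∈ t, ‖g i‖ * ‖⟪f i, v⟫_ℂ‖ := by
    have h1 : (‖v‖ : ℝ) ^ 2 = RCLike.re ⟪v, v⟫_ℂ := (inner_self_eq_norm_sq v).symm
    have h2 : ⟪v, v⟫_ℂ = ∑ i ∈ t, (starRingEnd ℂ) (g i) * ⟪f i, v⟫_ℂ := by
      rw [hv, sum_inner]
      exact Finset.sum_congr rfl fun i _ => inner_smul_left _ _ _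
    have h3 : RCLike.re ⟪v, v⟫_ℂ ≤ ‖⟪v, v⟫_ℂ‖ := RCLike.re_le_norm _
    have h4 : ‖⟪v, v⟫_ℂ‖ ≤ ∑ i ∈ t, ‖g i‖ * ‖⟪f i, v⟫_ℂ‖ := by
      rw [h2]
      refine le_trans (norm_sum_le _ _) (Finset.sum_le_sum fun i _ => ?_)
      rw [norm_mul, RCLike.norm_conj]
    linarith
  -- conclude ‖v‖² ≤ S
  nlinarith [norm_nonneg v, sq_nonneg (‖v‖ ^ 2 - S),
    Finset.sum_nonneg (fun i (_ : i ∈ t) => mul_nonneg (norm_nonneg (g i))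
      (norm_nonneg (⟪f i, v⟫_ℂ)))]

/-- ℓ² coefficients give a summable expansion. -/
lemma aux_summable (f : ι → H)
    (hP : ∀ x : H, HasSum (fun i => ‖⟪f i, x⟫_ℂ‖ ^ 2) (‖x‖ ^ 2))
    (g : ι → ℂ) (hg : Summable fun i => ‖g i‖ ^ 2) :
    Summable fun i => g i • f i := by
  rw [summable_iff_vanishing_norm]
  intro ε hε
  obtain ⟨s, hs⟩ := summable_iff_vanishing_norm.1 hg (ε ^ 2) (by positivity)
  refine ⟨s, fun t ht => ?_⟩
  have h1 := aux_finset_bound f hP g t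
  have h2 := hs t ht
  have h3 : ∑ i ∈ t, ‖g i‖ ^ 2 ≤ ‖∑ i ∈ t, ‖g i‖ ^ 2‖ := le_abs_self _
  have h4 : (0 : ℝ) ≤ ‖∑ i ∈ t, g i • f i‖ := norm_nonneg _
  nlinarith

/-- The Parseval frame reconstructs every vector. -/
lemma aux_reconstruct (f : ι → H)
    (hP : ∀ x : H, HasSum (fun i => ‖⟪f i, x⟫_ℂ‖ ^ 2) (‖x‖ ^ 2))
    (x : H) : ∑' i, ⟪f i, x⟫_ℂ • f i = x := by
  have hsum : ∀ y : H, Summable fun i => ⟪f i, y⟫_ℂ • f i := fun y =>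
    aux_summable f hP _ (hP y).summable
  -- the frame operator as a linear map
  let T : H →ₗ[ℂ] H :=
    { toFun := fun y => ∑' i, ⟪f i, y⟫_ℂ • f i
      map_add' := by
        intro y z
        rw [← Summable.tsum_add (hsum y) (hsum z)]
        exact tsum_congr fun i => by rw [inner_add_right, add_smul]
      map_smul' := by
        intro a y
        show (∑' i, ⟪f i, a • y⟫_ℂ • f i) = a • ∑' i, ⟪f i, y⟫_ℂ • f i
        rw [← Summable.tsum_const_smul a (hsum y)]
        exact tsum_congr fun i => by
          rw [inner_smul_right, smul_smul] }
  have hinner : ∀ y : H, ⟪y, T y⟫_ℂ = ((‖y‖ ^ 2 : ℝ) : ℂ) := by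
    intro y
    have h1 : ⟪y, T y⟫_ℂ = ∑' i, ⟪y, ⟪f i, y⟫_ℂ • f i⟫_ℂ :=
      ContinuousLinearMap.map_tsum (innerSL ℂ y) (hsum y)
    have h2 : ∀ i, ⟪y, ⟪f i, y⟫_ℂ • f i⟫_ℂ = ((‖⟪f i, y⟫_ℂ‖ ^ 2 : ℝ) : ℂ) := by
      intro i
      rw [inner_smul_right, ← inner_conj_symm y (f i), mul_comm, RCLike.conj_mul]
      norm_cast
    have h3 := ((hP y).mapL Complex.ofRealCLM).tsum_eq
    simp only [Complex.ofRealCLM_apply] at h3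
    rw [h1, tsum_congr h2, h3]
  have hT : T - LinearMap.id = 0 := by
    rw [← inner_map_self_eq_zero]
    intro y
    have : ⟪T y - y, y⟫_ℂ = ⟪T y, y⟫_ℂ - ⟪y, y⟫_ℂ := inner_sub_left _ _ _
    have hy : ⟪T y, y⟫_ℂ = (starRingEnd ℂ) ⟪y, T y⟫_ℂ := (inner_conj_symm _ _).symm
    simp only [LinearMap.sub_apply, LinearMap.id_apply, LinearMap.zero_apply]
    rw [this, hy, hinner y, inner_self_eq_norm_sq_to_K]
    simp [Complex.conj_ofReal]
  have := LinearMap.congr_fun hT x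
  simpa [sub_eq_zero, T] using this

/-- Key identity: for any subset `K`,
`‖S_K x‖² - ‖S_{Kᶜ} x‖² = ∑_K ‖c i‖² - ∑_{Kᶜ} ‖c i‖²`. -/
lemma aux_key (f : ι → H)
    (hP : ∀ x : H, HasSum (fun i => ‖⟪f i, x⟫_ℂ‖ ^ 2) (‖x‖ ^ 2))
    (x : H) (K : Set ι) :
    ‖∑' i : K, ⟪f i, x⟫_ℂ • (f i : H)‖ ^ 2 -
      ‖∑' i : ↥Kᶜ, ⟪f i, x⟫_ℂ • (f i : H)‖ ^ 2 =
    (∑' i : K, ‖⟪f i, x⟫_ℂ‖ ^ 2) - ∑' i : ↥Kᶜ, ‖⟪f i, x⟫_ℂ‖ ^ 2 := by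
  have hsum : Summable fun i => ⟪f i, x⟫_ℂ • f i := aux_summable f hP _ (hP x).summable
  have hsK : Summable ((fun i => ⟪f i, x⟫_ℂ • f i) ∘ ((↑) : K → ι)) := hsum.subtype K
  have hsKc : Summable ((fun i => ⟪f i, x⟫_ℂ • f i) ∘ ((↑) : ↥Kᶜ → ι)) := hsum.subtype Kᶜ
  set a : H := ∑' i : K, ⟪f i, x⟫_ℂ • (f i : H) with ha
  set b : H := ∑' i : ↥Kᶜ, ⟪f i, x⟫_ℂ • (f i : H) with hb
  have hab : a + b = x := by
    have := Summable.tsum_add_tsum_compl (f := fun i => ⟪f i, x⟫_ℂ • f i) hsK hsKc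
    rw [ha, hb, this, aux_reconstruct f hP x]
  -- inner products with x
  have hinner : ∀ (L : Set ι), Summable ((fun i => ⟪f i, x⟫_ℂ • f i) ∘ ((↑) : L → ι)) →
      ⟪x, ∑' i : L, ⟪f i, x⟫_ℂ • (f i : H)⟫_ℂ = ((∑' i : L, ‖⟪f i, x⟫_ℂ‖ ^ 2 : ℝ) : ℂ) := by
    intro L hsL
    have h1 : ⟪x, ∑' i : L, ⟪f i, x⟫_ℂ • (f i : H)⟫_ℂ
        = ∑' i : L, ⟪x, ⟪f (i : ι), x⟫_ℂ • f (i : ι)⟫_ℂ :=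
      ContinuousLinearMap.map_tsum (innerSL ℂ x) hsL
    have h2 : ∀ i : L, ⟪x, ⟪f (i : ι), x⟫_ℂ • f (i : ι)⟫_ℂ
        = ((‖⟪f (i : ι), x⟫_ℂ‖ ^ 2 : ℝ) : ℂ) := by
      intro i
      rw [inner_smul_right, ← inner_conj_symm x (f (i : ι)), mul_comm, RCLike.conj_mul]
      norm_cast
    have hsL2 : Summable ((fun i => ‖⟪f i, x⟫_ℂ‖ ^ 2) ∘ ((↑) : L → ι)) :=
      (hP x).summable.subtype L
    have h3 := (hsL2.hasSum.mapL Complex.ofRealCLM).tsum_eq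
    simp only [Complex.ofRealCLM_apply, Function.comp] at h3
    rw [h1, tsum_congr h2, h3]
  have hia : ⟪x, a⟫_ℂ = ((∑' i : K, ‖⟪f i, x⟫_ℂ‖ ^ 2 : ℝ) : ℂ) := hinner K hsK
  have hib : ⟪x, b⟫_ℂ = ((∑' i : ↥Kᶜ, ‖⟪f i, x⟫_ℂ‖ ^ 2 : ℝ) : ℂ) := hinner Kᶜ hsKc
  have hmain : ‖a‖ ^ 2 - ‖b‖ ^ 2 = RCLike.re ⟪x, a⟫_ℂ - RCLike.re ⟪x, b⟫_ℂ := by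
    rw [← hab]
    have e1 : RCLike.re ⟪a + b, a⟫_ℂ = RCLike.re ⟪a, a⟫_ℂ + RCLike.re ⟪b, a⟫_ℂ := by
      rw [inner_add_left]; exact map_add _ _ _
    have e2 : RCLike.re ⟪a + b, b⟫_ℂ = RCLike.re ⟪a, b⟫_ℂ + RCLike.re ⟪b, b⟫_ℂ := by
      rw [inner_add_left]; exact map_add _ _ _
    have e3 : RCLike.re ⟪b, a⟫_ℂ = RCLike.re ⟪a, b⟫_ℂ := inner_re_symm b a
    have e4 : RCLike.re ⟪a, a⟫_ℂ = ‖a‖ ^ 2 := inner_self_eq_norm_sq a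
    have e5 : RCLike.re ⟪b, b⟫_ℂ = ‖b‖ ^ 2 := inner_self_eq_norm_sq b
    linarith
  rw [hmain, hia, hib]
  norm_num

end Aux

/-- Parseval Frame Identity for overlapping divisions: for a Parseval frame `{f_i}`,
`J ⊆ I`, `E ⊆ J^c` and any `x`:
`‖∑_{J∪E} ⟨x,f_i⟩f_i‖² − ‖∑_{J^c∖E} ⟨x,f_i⟩f_i‖²
  = ‖∑_J ⟨x,f_i⟩f_i‖² − ‖∑_{J^c} ⟨x,f_i⟩f_i‖² + 2∑_E |⟨x,f_i⟩|²`. -/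
theorem stmt_6 {H : Type*} [NormedAddCommGroup H] [InnerProductSpace ℂ H] [CompleteSpace H]
    {ι : Type*} (f : ι → H)
    (hP : ∀ x : H, HasSum (fun i => ‖⟪f i, x⟫_ℂ‖ ^ 2) (‖x‖ ^ 2))
    (J E : Set ι) (hE : E ⊆ Jᶜ) (x : H) :
    ‖∑' i : ↥(J ∪ E), ⟪f i, x⟫_ℂ • (f i : H)‖ ^ 2 -
      ‖∑' i : ↥(Jᶜ \ E), ⟪f i, x⟫_ℂ • (f i : H)‖ ^ 2 =
    ‖∑' i : J, ⟪f i, x⟫_ℂ • (f i : H)‖ ^ 2 -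
      ‖∑' i : ↥Jᶜ, ⟪f i, x⟫_ℂ • (f i : H)‖ ^ 2 +
      2 * ∑' i : E, ‖⟪f i, x⟫_ℂ‖ ^ 2 := by
  have hc : Summable fun i => ‖⟪f i, x⟫_ℂ‖ ^ 2 := (hP x).summable
  have hset : (J ∪ E)ᶜ = Jᶜ \ E := by
    rw [Set.compl_union, Set.diff_eq]
  have key1 := aux_key f hP x J
  have key2 := aux_key f hP x (J ∪ E)
  rw [tsum_congr_set_coe (fun i => ⟪f i, x⟫_ℂ • (f i : H)) hset,
    tsum_congr_set_coe (fun i => ‖⟪f i, x⟫_ℂ‖ ^ 2) hset] at key2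
  -- split the tsums of coefficients
  have hdJE : Disjoint J E := Set.disjoint_left.mpr fun i hiJ hiE => (hE hiE) hiJ
  have hsplit1 : (∑' i : ↥(J ∪ E), ‖⟪f i, x⟫_ℂ‖ ^ 2)
      = (∑' i : J, ‖⟪f i, x⟫_ℂ‖ ^ 2) + ∑' i : E, ‖⟪f i, x⟫_ℂ‖ ^ 2 :=
    Summable.tsum_union_disjoint hdJE (hc.subtype J) (hc.subtype E)
  have hdJcE : Disjoint (Jᶜ \ E) E := disjoint_sdiff_self_left
  have hunion : (Jᶜ \ E) ∪ E = Jᶜ := Set.diff_union_of_subset hE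
  have hsplit2 : (∑' i : ↥Jᶜ, ‖⟪f i, x⟫_ℂ‖ ^ 2)
      = (∑' i : ↥(Jᶜ \ E), ‖⟪f i, x⟫_ℂ‖ ^ 2) + ∑' i : E, ‖⟪f i, x⟫_ℂ‖ ^ 2 := by
    rw [tsum_congr_set_coe (fun i => ‖⟪f i, x⟫_ℂ‖ ^ 2) hunion.symm]
    exact Summable.tsum_union_disjoint hdJcE (hc.subtype _) (hc.subtype E)
  rw [key2, key1, hsplit1, hsplit2]
  ring
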